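/- Let D ≥ 1, n ≥ D + 1, and let P : Fin n → Fin D × Fin D be any assignment of index pairs. Then there exists a ∈ Fin D such that either (F₁-type configuration) there exist distinct slots k ≠ l with P k = (a,a) and with a occurring as one of the two components of P l, or (F₂-type configuration) there exist pairwise distinct slots k, l, m such that a occurs as a component of each of P k, P l, and P m. -/
import Mathlib


theorem stmt_7 (D n : ℕ) (hD : 1 ≤ D) (hn : D + 1 ≤ n)
    (P : Fin n → Fin D × Fin D) :
    ∃ a : Fin D,
      (∃ k l : Fin n, k ≠ l ∧ P k = (a, a) ∧ ((P l).1 = a ∨ (P l).2 = a)) ∨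
      (∃ k l m : Fin n, k ≠ l ∧ k ≠ m ∧ l ≠ m ∧
        ((P k).1 = a ∨ (P k).2 = a) ∧
        ((P l).1 = a ∨ (P l).2 = a) ∧
        ((P m).1 = a ∨ (P m).2 = a)) := by
  classical
  set f : Fin n × Bool → Fin D := fun p => if p.2 then (P p.1).1 else (P p.1).2 with hf
  have hcard : Fintype.card (Fin D) * 2 < Fintype.card (Fin n × Bool) := by
    simp only [Fintype.card_fin, Fintype.card_prod, Fintype.card_bool]
    omega
  obtain ⟨a, ha⟩ := Fintype.exists_lt_card_fiber_of_mul_lt_card f hcard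
  set s := Finset.univ.filter fun p => f p = a with hs
  -- extract three distinct elements of s
  have hpos : 0 < s.card := by omega
  obtain ⟨x, hx⟩ := Finset.card_pos.mp hpos
  have h2 : 1 < (s.erase x).card := by
    rw [Finset.card_erase_of_mem hx]; omega
  obtain ⟨y, hy, z, hz, hyz⟩ := Finset.one_lt_card.mp h2
  have hxy : x ≠ y := fun h => (Finset.mem_erase.mp hy).1 h.symm
  have hxz : x ≠ z := fun h => (Finset.mem_erase.mp hz).1 h.symm
  have hy' : y ∈ s := Finset.mem_of_mem_erase hy
  have hz' : z ∈ s := Finset.mem_of_mem_erase hz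
  have comp : ∀ p ∈ s, (P p.1).1 = a ∨ (P p.1).2 = a := by
    intro p hp
    have := (Finset.mem_filter.mp hp).2
    rcases p with ⟨i, b⟩
    cases b
    · exact Or.inr (by simpa [hf] using this)
    · exact Or.inl (by simpa [hf] using this)
  -- two elements with same slot, different bool → P that slot = (a,a)
  have both : ∀ p ∈ s, ∀ q ∈ s, p.1 = q.1 → p ≠ q → P p.1 = (a, a) := by
    rintro ⟨i, b⟩ hp ⟨j, c⟩ hq (rfl : i = j) hne
    have hb : b ≠ c := fun h => hne (by rw [h])
    have h1 := (Finset.mem_filter.mp hp).2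
    have h2 := (Finset.mem_filter.mp hq).2
    have : (P i).1 = a ∧ (P i).2 = a := by
      cases b <;> cases c
      · exact absurd rfl hb
      · exact ⟨by simpa [hf] using h2, by simpa [hf] using h1⟩
      · exact ⟨by simpa [hf] using h1, by simpa [hf] using h2⟩
      · exact absurd rfl hb
    exact Prod.ext this.1 this.2
  refine ⟨a, ?_⟩
  by_cases h12 : x.1 = y.1
  · -- P x.1 = (a,a); z has different slot
    have hxz1 : x.1 ≠ z.1 := by
      intro h
      have hyz1 : y.1 = z.1 := h12.symm.trans h
      -- x, y, z all same slot, distinct pairs → 3 distinct bools, impossible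
      have : x.2 ≠ y.2 := fun hb => hxy (Prod.ext h12 hb)
      have h2 : x.2 ≠ z.2 := fun hb => hxz (Prod.ext h hb)
      have h3 : y.2 ≠ z.2 := fun hb => hyz (Prod.ext hyz1 hb)
      rcases x with ⟨_, b⟩; rcases y with ⟨_, c⟩; rcases z with ⟨_, d⟩
      simp only at this h2 h3
      cases b <;> cases c <;> cases d <;>
        first | exact absurd rfl this | exact absurd rfl h2 | exact absurd rfl h3
    exact Or.inl ⟨x.1, z.1, hxz1, both x hx y hy' h12 hxy, comp z hz'⟩
  · by_cases h13 : x.1 = z.1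
    · exact Or.inl ⟨x.1, y.1, h12, both x hx z hz' h13 hxz, comp y hy'⟩
    · by_cases h23 : y.1 = z.1
      · have : y.1 ≠ x.1 := fun h => h12 h.symm
        exact Or.inl ⟨y.1, x.1, this, both y hy' z hz' h23 hyz, comp x hx⟩
      · exact Or.inr ⟨x.1, y.1, z.1, h12, h13, h23, comp x hx, comp y hy', comp z hz'⟩
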